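/- For two complete graphs H_1 and H_2 on vertex subsets of [n], with edges {i,j} in H_1, {k,ℓ} in H_2 and {j,k} a common edge of H_1 and H_2, the identity x_j y_ℓ Δ_{ik} - x_ℓ y_k Δ_{ij} = x_i y_k Δ_{jℓ} - x_j y_i Δ_{kℓ} holds in K[x_1,...,x_n,y_1,...,y_n], and this element lies in J_{H_1} ∩ J_{H_2}. -/
import Mathlib


open MvPolynomial

/-- The 2-minor `Δ_{ij} = x_i y_j - x_j y_i` in `K[x_1,…,x_n,y_1,…,y_n]`,
where `x_i := X (Sum.inl i)` and `y_i := X (Sum.inr i)`. -/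
noncomputable def binDelta (K : Type) [Field K] (n : ℕ) (i j : Fin n) :
    MvPolynomial (Fin n ⊕ Fin n) K :=
  X (Sum.inl i) * X (Sum.inr j) - X (Sum.inl j) * X (Sum.inr i)

/-- Let `H₁`, `H₂` be the complete graphs on vertex sets `V₁, V₂ ⊆ [n]`, with binomial edge
ideals `J_{H₁}`, `J_{H₂}`. For edges `{i,j}` of `H₁` and `{k,ℓ}` of `H₂` such that `{j,k}` is a
common edge of `H₁` and `H₂`, the identity
`x_j y_ℓ Δ_{ik} - x_ℓ y_k Δ_{ij} = x_i y_k Δ_{jℓ} - x_j y_i Δ_{kℓ}` holds, and this element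
lies in `J_{H₁} ∩ J_{H₂}`. -/

lemma binDelta_self (K : Type) [Field K] (n : ℕ) (a : Fin n) : binDelta K n a a = 0 := by
  simp [binDelta]

lemma mul_binDelta_mem (K : Type) [Field K] (n : ℕ) (V : Finset (Fin n)) (a b : Fin n)
    (ha : a ∈ V) (hb : b ∈ V) (c : MvPolynomial (Fin n ⊕ Fin n) K) :
    c * binDelta K n a b ∈
      Ideal.span {f : MvPolynomial (Fin n ⊕ Fin n) K |
          ∃ a ∈ V, ∃ b ∈ V, a ≠ b ∧ f = binDelta K n a b} := by
  by_cases hab : a = b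
  · simp [hab, binDelta_self]
  · exact Ideal.mul_mem_left _ _ (Ideal.subset_span ⟨a, ha, b, hb, hab, rfl⟩)

theorem common_edge_element (K : Type) [Field K] (n : ℕ) (V₁ V₂ : Finset (Fin n))
    (i j k l : Fin n) (hi : i ∈ V₁) (hj₁ : j ∈ V₁) (hij : i ≠ j)
    (hk₂ : k ∈ V₂) (hl : l ∈ V₂) (hkl : k ≠ l)
    (hj₂ : j ∈ V₂) (hk₁ : k ∈ V₁) (hjk : j ≠ k) :
    (X (Sum.inl j) * X (Sum.inr l) * binDelta K n i k -
        X (Sum.inl l) * X (Sum.inr k) * binDelta K n i j =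
      X (Sum.inl i) * X (Sum.inr k) * binDelta K n j l -
        X (Sum.inl j) * X (Sum.inr i) * binDelta K n k l) ∧
    X (Sum.inl j) * X (Sum.inr l) * binDelta K n i k -
        X (Sum.inl l) * X (Sum.inr k) * binDelta K n i j ∈
      Ideal.span {f : MvPolynomial (Fin n ⊕ Fin n) K |
          ∃ a ∈ V₁, ∃ b ∈ V₁, a ≠ b ∧ f = binDelta K n a b} ⊓
        Ideal.span {f | ∃ a ∈ V₂, ∃ b ∈ V₂, a ≠ b ∧ f = binDelta K n a b} := by
  refine ⟨by simp only [binDelta]; ring, ?_, ?_⟩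
  · exact Ideal.sub_mem _ (mul_binDelta_mem K n V₁ i k hi hk₁ _)
      (mul_binDelta_mem K n V₁ i j hi hj₁ _)
  · have h : X (Sum.inl j) * X (Sum.inr l) * binDelta K n i k -
        X (Sum.inl l) * X (Sum.inr k) * binDelta K n i j =
      X (Sum.inl i) * X (Sum.inr k) * binDelta K n j l -
        X (Sum.inl j) * X (Sum.inr i) * binDelta K n k l := by
      simp only [binDelta]; ring
    rw [h]
    exact Ideal.sub_mem _ (mul_binDelta_mem K n V₂ j l hj₂ hl _)
      (mul_binDelta_mem K n V₂ k l hk₂ hl _)
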